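/- If X_1,...,X_k are i.i.d. Bernoulli random variables with success probability p = J + (1-J)/2^b, then the b-bit MinHash estimator Ĵ_b = (∑X_i/k - 1/2^b)/(1 - 1/2^b) is unbiased for J and has variance (1-J)(J + 1/(2^b - 1))/k. -/

import Mathlib

open MeasureTheory ProbabilityTheory

lemma my_variance_add_const {Ω : Type*} [MeasureSpace Ω]
    [IsProbabilityMeasure (ℙ : Measure Ω)] (Y : Ω → ℝ)
    (hY : Integrable Y ℙ) (d : ℝ) :
    variance (fun ω => Y ω + d) ℙ = variance Y ℙ := by
  have hmean : (∫ ω, (Y ω + d) ∂(ℙ : Measure Ω)) = (∫ ω, Y ω ∂ℙ) + d := by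
    rw [integral_add hY (integrable_const d)]; simp
  simp only [ProbabilityTheory.variance, ProbabilityTheory.evariance]
  congr 1
  apply lintegral_congr
  intro ω
  rw [hmean]
  ring_nf

/-- If `X₁,…,X_k` are i.i.d. Bernoulli with success probability `p = J + (1-J)/2^b`, then the
b-bit MinHash estimator `Ĵ_b = (∑ Xᵢ/k - 1/2^b)/(1 - 1/2^b)` is unbiased for `J` and has
variance `(1-J)(J + 1/(2^b - 1))/k`. -/
theorem bbit_minhash_estimator {Ω : Type*} [MeasureSpace Ω]
    [IsProbabilityMeasure (ℙ : Measure Ω)]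
    (b : ℕ) (hb : 1 ≤ b) (k : ℕ) (hk : 1 ≤ k)
    (J : ℝ) (hJ : J ∈ Set.Icc (0 : ℝ) 1)
    (X : Fin k → Ω → ℝ) (hmeas : ∀ i, Measurable (X i))
    (h01 : ∀ i ω, X i ω = 0 ∨ X i ω = 1)
    (hBer : ∀ i, ℙ {ω | X i ω = 1} = ENNReal.ofReal (J + (1 - J) / 2 ^ b))
    (hind : iIndepFun X ℙ) :
    (∫ ω, ((∑ i, X i ω) / k - 1 / 2 ^ b) / (1 - 1 / 2 ^ b) ∂ℙ) = J ∧
      variance (fun ω => ((∑ i, X i ω) / k - 1 / 2 ^ b) / (1 - 1 / 2 ^ b)) ℙ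
        = (1 - J) * (J + 1 / (2 ^ b - 1)) / k := by
  classical
  obtain ⟨hJ0, hJ1⟩ := hJ
  set p : ℝ := J + (1 - J) / 2 ^ b with hp
  set c : ℝ := 1 / 2 ^ b with hc
  have h2b : (2:ℝ) ≤ 2 ^ b := by
    calc (2:ℝ) = 2 ^ 1 := (pow_one 2).symm
    _ ≤ 2 ^ b := by exact pow_le_pow_right₀ one_le_two hb
  have hc1 : c < 1 := by
    rw [hc, div_lt_one (by linarith)]; linarith
  have hc0 : 0 < c := by rw [hc]; positivity
  have hcne : (1:ℝ) - c ≠ 0 := by linarith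
  have hkpos : (0:ℝ) < k := by exact_mod_cast hk
  have hkne : (k:ℝ) ≠ 0 := ne_of_gt hkpos
  have hp0 : 0 ≤ p := by
    have h1 : (0:ℝ) ≤ (1 - J) / 2 ^ b :=
      div_nonneg (by linarith) (by positivity)
    rw [hp]; linarith
  have hp1 : p ≤ 1 := by
    have h1 : (1 - J) / 2 ^ b ≤ (1 - J) :=
      div_le_self (by linarith) (by linarith)
    rw [hp]; linarith
  -- X i is the indicator of its level set
  have hXind : ∀ i, X i = Set.indicator ((X i) ⁻¹' {1}) (fun _ => (1:ℝ)) := by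
    intro i; funext ω
    rcases h01 i ω with h | h
    · rw [h, Set.indicator_apply]
      simp only [Set.mem_preimage, Set.mem_singleton_iff, h]
      norm_num
    · rw [h, Set.indicator_apply]; simp [h]
  have hAmeas : ∀ i, MeasurableSet ((X i) ⁻¹' {1}) := fun i =>
    (hmeas i) (measurableSet_singleton 1)
  have hAP : ∀ i, ℙ ((X i) ⁻¹' {1}) = ENNReal.ofReal p := by
    intro i; rw [← hBer i]; rfl
  have hEX : ∀ i, (∫ ω, X i ω ∂ℙ) = p := by
    intro i
    rw [show (fun ω => X i ω) = X i from rfl, hXind i,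
      integral_indicator_const _ (hAmeas i), measureReal_def, hAP i, smul_eq_mul, mul_one,
      ENNReal.toReal_ofReal hp0]
  have hmem : ∀ i, MemLp (X i) 2 ℙ := by
    intro i
    apply MemLp.of_bound ((hmeas i).aestronglyMeasurable) 1
    filter_upwards with ω
    rcases h01 i ω with h | h <;> simp [h]
  have hsq : ∀ i, (X i) ^ 2 = X i := by
    intro i; funext ω
    rcases h01 i ω with h | h <;> simp [h]
  have hVX : ∀ i, variance (X i) ℙ = p * (1 - p) := by
    intro i
    rw [variance_eq_sub (hmem i), hsq i]
    have : (∫ ω, X i ω ∂(ℙ : Measure Ω)) = p := hEX i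
    rw [show ℙ[X i] = p from this]
    ring
  -- sum
  have hint : ∀ i, Integrable (X i) ℙ := fun i => (hmem i).integrable one_le_two
  have hES : (∫ ω, (∑ i, X i ω) ∂(ℙ : Measure Ω)) = k * p := by
    rw [integral_finset_sum _ (fun i _ => hint i)]
    simp [hEX, Finset.sum_const, Finset.card_univ]
  have hVS : variance (fun ω => ∑ i, X i ω) ℙ = k * (p * (1 - p)) := by
    have h1 : variance (∑ i, X i) ℙ = ∑ i : Fin k, variance (X i) ℙ :=
      IndepFun.variance_sum (fun i _ => hmem i)
        (fun i _ j _ hij => hind.indepFun hij)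
    have h2 : (fun ω => ∑ i, X i ω) = ∑ i, X i := by
      funext ω; simp [Finset.sum_apply]
    rw [h2, h1]
    simp [hVX, Finset.sum_const, Finset.card_univ, mul_comm]
  -- rewrite the estimator as an affine function of the sum
  have hfeq : (fun ω => ((∑ i, X i ω) / k - c) / (1 - c))
      = fun ω => (1 / ((1 - c) * k)) * (∑ i, X i ω) + (-c / (1 - c)) := by
    funext ω; field_simp; ring
  have hintS : Integrable (fun ω => ∑ i, X i ω) ℙ := by
    apply integrable_finset_sum
    intro i _; exact hint i
  have h2b1 : (2:ℝ) ^ b - 1 ≠ 0 := by linarith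
  have h2bne : (2:ℝ) ^ b ≠ 0 := by linarith
  constructor
  · rw [show (fun ω => ((∑ i, X i ω) / ↑k - 1 / 2 ^ b) / (1 - 1 / 2 ^ b))
      = fun ω => (1 / ((1 - c) * k)) * (∑ i, X i ω) + (-c / (1 - c)) from hfeq]
    rw [integral_add (hintS.const_mul _) (integrable_const _)]
    rw [integral_const_mul, hES]
    simp only [integral_const, measure_univ, probReal_univ, ENNReal.toReal_one, smul_eq_mul, one_mul]
    have key : (1 / ((1 - c) * k)) * (k * p) + (-c / (1 - c)) = (p - c) / (1 - c) := by
      field_simp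
      ring
    rw [key, hp, hc]
    rw [div_eq_iff hcne]
    field_simp
    simp only [hc]
    field_simp
    ring
  · rw [show (fun ω => ((∑ i, X i ω) / ↑k - 1 / 2 ^ b) / (1 - 1 / 2 ^ b))
      = fun ω => (1 / ((1 - c) * k)) * (∑ i, X i ω) + (-c / (1 - c)) from hfeq]
    rw [my_variance_add_const _ (hintS.const_mul _) _]
    rw [variance_const_mul, hVS]
    have key : (1 / ((1 - c) * k)) ^ 2 * (k * (p * (1 - p)))
        = (p * (1 - p)) / ((1 - c) ^ 2 * k) := by
      field_simp
    rw [key, hp, hc]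
    rw [div_eq_div_iff (by positivity) hkne]
    field_simp
    ring_nf
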